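/- Let A be a 3-dimensional evolution algebra and I a 2-dimensional ideal of A. Then exactly one of the following holds: (1) I is the span of two elements of some natural basis of A; (2) case (1) fails, but there is a natural basis {e_1, e_2, e_3} and distinct indices i, j, k with I = span{e_i, e_j + e_k}, and in this case I is an evolution algebra; (3) neither (1) nor (2) holds, but there is a natural basis {e_1, e_2, e_3} and distinct indices i, j, k with I = span{e_i + e_j, e_j + e_k}; in this last case, if A is perfect (A² = A), then I is not an evolution algebra (has no natural basis as an algebra in itself). -/

import Mathlib

namespace EvolutionAlgebra

variable {K A : Type*} [Field K] [AddCommGroup A] [Module K A]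

/-- `f` is a natural basis for the multiplication `mul`. -/
def IsNaturalBasis (mul : A →ₗ[K] A →ₗ[K] A) {ι : Type*} (f : Module.Basis ι K A) : Prop :=
  ∀ i j, i ≠ j → mul (f i) (f j) = 0

/-- `I` is the span of two elements of some natural basis. -/
def SpannedByTwoBasisVectors (mul : A →ₗ[K] A →ₗ[K] A) (I : Submodule K A) : Prop :=
  ∃ f : Module.Basis (Fin 3) K A, IsNaturalBasis mul f ∧
    ∃ i j : Fin 3, i ≠ j ∧ I = Submodule.span K {f i, f j}

/-- `I` is the span of `eᵢ` and `eⱼ + eₖ` for some natural basis, with `i, j, k` distinct. -/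
def SpannedTypeTwo (mul : A →ₗ[K] A →ₗ[K] A) (I : Submodule K A) : Prop :=
  ∃ f : Module.Basis (Fin 3) K A, IsNaturalBasis mul f ∧
    ∃ i j k : Fin 3, i ≠ j ∧ j ≠ k ∧ i ≠ k ∧ I = Submodule.span K {f i, f j + f k}

/-- `I` is the span of `eᵢ + eⱼ` and `eⱼ + eₖ` for some natural basis, with `i, j, k` distinct. -/
def SpannedTypeThree (mul : A →ₗ[K] A →ₗ[K] A) (I : Submodule K A) : Prop :=
  ∃ f : Module.Basis (Fin 3) K A, IsNaturalBasis mul f ∧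
    ∃ i j k : Fin 3, i ≠ j ∧ j ≠ k ∧ i ≠ k ∧ I = Submodule.span K {f i + f j, f j + f k}

/-- A two-dimensional ideal is an evolution ideal if, as an algebra on its own,
it has a natural basis. -/
def IsEvolutionIdeal (mul : A →ₗ[K] A →ₗ[K] A) (I : Submodule K A) : Prop :=
  ∃ g : Module.Basis (Fin 2) K ↥I, ∀ i j, i ≠ j → mul (g i : A) (g j : A) = 0

/-! ### Auxiliary lemmas -/

lemma range_pair {a b : A} : Set.range ![a, b] = {a, b} := by
  ext x; simp [Fin.exists_fin_two]; tauto

lemma li_pair (f : Module.Basis (Fin 3) K A) {i j : Fin 3} (hij : i ≠ j) :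
    LinearIndependent K ![f i, f j] := by
  have h : ![f i, f j] = f ∘ ![i, j] := by funext l; fin_cases l <;> rfl
  rw [h]
  exact f.linearIndependent.comp _ (by
    intro a b hab
    fin_cases a <;> fin_cases b <;> simp_all)

lemma liA (f : Module.Basis (Fin 3) K A) {i j k : Fin 3} (hij : i ≠ j) (hjk : j ≠ k) (hik : i ≠ k) :
    LinearIndependent K ![f i, f j + f k] := by
  rw [linearIndependent_fin2]
  constructor
  · intro h
    have h' : f j + f k = 0 := h
    have h2 : f.repr (f j + f k) j = 0 := by rw [h']; simp
    simp [Module.Basis.repr_self, Finsupp.single_apply, Ne.symm hjk] at h2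
  · intro a h
    have h' : a • (f j + f k) = f i := h
    have h2 := congrArg (fun z => f.repr z i) h'
    simp [Module.Basis.repr_self, Finsupp.single_apply, Ne.symm hij, Ne.symm hik] at h2

lemma liB (f : Module.Basis (Fin 3) K A) {i j k : Fin 3} (hij : i ≠ j) (hjk : j ≠ k) (hik : i ≠ k) :
    LinearIndependent K ![f i + f j, f j + f k] := by
  rw [linearIndependent_fin2]
  constructor
  · intro h
    have h' : f j + f k = 0 := h
    have h2 : f.repr (f j + f k) j = 0 := by rw [h']; simp
    simp [Module.Basis.repr_self, Finsupp.single_apply, Ne.symm hjk] at h2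
  · intro a h
    have h' : a • (f j + f k) = f i + f j := h
    have h2 := congrArg (fun z => f.repr z i) h'
    simp [Module.Basis.repr_self, Finsupp.single_apply, Ne.symm hij, Ne.symm hik] at h2

lemma span_eq_of [FiniteDimensional K A] {I : Submodule K A}
    (hdim : Module.finrank K I = 2) {a b : A} (ha : a ∈ I) (hb : b ∈ I)
    (hli : LinearIndependent K ![a, b]) : I = Submodule.span K {a, b} := by
  have hsub : ({a, b} : Set A) ⊆ I := by rintro x (rfl | rfl) <;> assumption
  have hfr : Module.finrank K (Submodule.span K ({a, b} : Set A)) = 2 := by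
    rw [← range_pair (a := a) (b := b), finrank_span_eq_card hli]; simp
  exact (Submodule.eq_of_le_of_finrank_le (Submodule.span_le.mpr hsub)
    (by rw [hfr, hdim])).symm

lemma nat_unitsSMul (mul : A →ₗ[K] A →ₗ[K] A) (e : Module.Basis (Fin 3) K A)
    (hnat : IsNaturalBasis mul e) (w : Fin 3 → Kˣ) :
    IsNaturalBasis mul (e.unitsSMul w) := by
  intro i j hij
  simp [Module.Basis.unitsSMul_apply, Units.smul_def, map_smul, LinearMap.smul_apply, hnat i j hij]

lemma products_mem (mul : A →ₗ[K] A →ₗ[K] A) (f : Module.Basis (Fin 3) K A)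
    (hnat : IsNaturalBasis mul f) (I : Submodule K A)
    (hsq : ∀ l, mul (f l) (f l) ∈ I) : ∀ x y : A, mul x y ∈ I := by
  have h1 : ∀ (l : Fin 3) (y : A), mul (f l) y ∈ I := by
    intro l y
    have hy : mul (f l) y = ∑ m, f.repr y m • mul (f l) (f m) := by
      conv_lhs => rw [← f.sum_repr y]
      rw [map_sum]
      simp [map_smul]
    rw [hy]
    refine Submodule.sum_mem _ fun m _ => ?_
    by_cases hm : l = m
    · subst hm; exact Submodule.smul_mem _ _ (hsq l)
    · rw [hnat l m hm, smul_zero]; exact I.zero_mem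
  intro x y
  have hx : mul x y = ∑ l, f.repr x l • mul (f l) y := by
    conv_lhs => rw [← f.sum_repr x]
    rw [map_sum, LinearMap.sum_apply]
    simp [LinearMap.smul_apply, map_smul]
  rw [hx]
  exact Submodule.sum_mem _ fun l _ => Submodule.smul_mem _ _ (h1 l y)

lemma fin3_cover {i j k : Fin 3} (hij : i ≠ j) (hjk : j ≠ k) (hik : i ≠ k) (l : Fin 3) :
    l = i ∨ l = j ∨ l = k := by
  fin_cases i <;> fin_cases j <;> fin_cases k <;> fin_cases l <;> simp_all

/-- A type-two ideal is an evolution ideal. -/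
lemma evo_of_type2 (mul : A →ₗ[K] A →ₗ[K] A) (hcomm : ∀ x y : A, mul x y = mul y x)
    {I : Submodule K A} (h : SpannedTypeTwo mul I) : IsEvolutionIdeal mul I := by
  obtain ⟨f, hnat, i, j, k, hij, hjk, hik, hspan⟩ := h
  have hli : LinearIndependent K ![f i, f j + f k] := liA f hij hjk hik
  have hr : Submodule.span K (Set.range ![f i, f j + f k]) = I := by
    rw [range_pair]; exact hspan.symm
  set g := (Module.Basis.span hli).map (LinearEquiv.ofEq _ _ hr) with hgdef
  refine ⟨g, ?_⟩
  have hg : ∀ m : Fin 2, (g m : A) = ![f i, f j + f k] m := by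
    intro m
    simp [hgdef, Module.Basis.map_apply, LinearEquiv.coe_ofEq_apply, Module.Basis.span_apply]
  have h01 : mul (f i) (f j + f k) = 0 := by
    rw [map_add, hnat i j hij, hnat i k hik, add_zero]
  intro a b hab
  fin_cases a <;> fin_cases b
  · exact absurd rfl hab
  · show mul (g 0 : A) (g 1 : A) = 0
    rw [hg 0, hg 1]; exact h01
  · show mul (g 1 : A) (g 0 : A) = 0
    rw [hg 1, hg 0, hcomm]; exact h01
  · exact absurd rfl hab

/-- In the perfect case, a two-dimensional ideal of type three is impossible. -/
lemma type3_perfect [FiniteDimensional K A] (mul : A →ₗ[K] A →ₗ[K] A)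
    {I : Submodule K A} (h3 : SpannedTypeThree mul I)
    (hI : ∀ x ∈ I, ∀ y : A, mul x y ∈ I) (hdim : Module.finrank K I = 2)
    (hA : Module.finrank K A = 3)
    (hperf : Submodule.span K {z : A | ∃ x y : A, z = mul x y} = ⊤) : False := by
  obtain ⟨f, hnat, i, j, k, hij, hjk, hik, hspan⟩ := h3
  have hu : f i + f j ∈ I := hspan ▸ Submodule.subset_span (Or.inl rfl)
  have hv : f j + f k ∈ I := hspan ▸ Submodule.subset_span (Or.inr rfl)
  have hsq : ∀ l, mul (f l) (f l) ∈ I := by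
    have hi2 : mul (f i) (f i) ∈ I := by
      have heq : mul (f i + f j) (f i) = mul (f i) (f i) := by
        rw [map_add, LinearMap.add_apply, hnat j i (Ne.symm hij), add_zero]
      exact heq ▸ hI _ hu (f i)
    have hj2 : mul (f j) (f j) ∈ I := by
      have heq : mul (f i + f j) (f j) = mul (f j) (f j) := by
        rw [map_add, LinearMap.add_apply, hnat i j hij, zero_add]
      exact heq ▸ hI _ hu (f j)
    have hk2 : mul (f k) (f k) ∈ I := by
      have heq : mul (f j + f k) (f k) = mul (f k) (f k) := by
        rw [map_add, LinearMap.add_apply, hnat j k hjk, zero_add]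
      exact heq ▸ hI _ hv (f k)
    intro l
    rcases fin3_cover hij hjk hik l with rfl | rfl | rfl <;> assumption
  have hall : ∀ x y : A, mul x y ∈ I := products_mem mul f hnat I hsq
  have htop : (⊤ : Submodule K A) ≤ I := by
    rw [← hperf, Submodule.span_le]
    rintro z ⟨x, y, rfl⟩
    exact hall x y
  have : I = ⊤ := top_le_iff.mp htop
  rw [this, finrank_top, hA] at hdim
  exact by omega

theorem stmt17
    (mul : A →ₗ[K] A →ₗ[K] A) (hcomm : ∀ x y : A, mul x y = mul y x)
    (e : Module.Basis (Fin 3) K A) (hnat : IsNaturalBasis mul e)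
    (I : Submodule K A) (hI : ∀ x ∈ I, ∀ y : A, mul x y ∈ I)
    (hdim : Module.finrank K I = 2) :
    SpannedByTwoBasisVectors mul I ∨
      (¬SpannedByTwoBasisVectors mul I ∧ SpannedTypeTwo mul I ∧
        IsEvolutionIdeal mul I) ∨
      (¬SpannedByTwoBasisVectors mul I ∧ ¬SpannedTypeTwo mul I ∧
        SpannedTypeThree mul I ∧
        (Submodule.span K {z : A | ∃ x y : A, z = mul x y} = ⊤ →
          ¬IsEvolutionIdeal mul I)) := by
  classical
  haveI : Module.Finite K A := Module.Finite.of_basis e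
  have hA3 : Module.finrank K A = 3 := by
    rw [Module.finrank_eq_card_basis e]; simp
  -- construct a functional with kernel I
  have hq : Module.finrank K (A ⧸ I) = 1 := by
    have := Submodule.finrank_quotient_add_finrank I
    omega
  obtain b : Module.Basis (Fin 1) K (A ⧸ I) := Module.finBasisOfFinrankEq K _ hq
  set φ : A →ₗ[K] K := ((Finsupp.lapply 0).comp b.repr.toLinearMap).comp I.mkQ with hφ
  have hker : ∀ x : A, x ∈ I ↔ φ x = 0 := by
    intro x
    constructor
    · intro hx
      simp [hφ, (Submodule.Quotient.mk_eq_zero I).mpr hx]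
    · intro hx
      have h0 : b.repr (I.mkQ x) = 0 := by
        refine Finsupp.ext fun a => ?_
        fin_cases a
        simpa [hφ] using hx
      have : I.mkQ x = 0 := by
        rwa [b.repr.map_eq_zero_iff] at h0
      simpa [Submodule.Quotient.mk_eq_zero] using this
  set c : Fin 3 → K := fun l => φ (e l) with hc
  -- helper: case of two vanishing coefficients
  have case1 : ∀ {j k : Fin 3}, j ≠ k → c j = 0 → c k = 0 →
      SpannedByTwoBasisVectors mul I := by
    intro j k hjk hcj hck
    exact ⟨e, hnat, j, k, hjk,
      span_eq_of hdim ((hker _).mpr hcj) ((hker _).mpr hck) (li_pair e hjk)⟩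
  -- helper: exactly one vanishing coefficient
  have case2 : ∀ {i j k : Fin 3}, i ≠ j → j ≠ k → i ≠ k →
      c i ≠ 0 → c j ≠ 0 → c k = 0 → SpannedTypeTwo mul I := by
    intro i j k hij hjk hik hci hcj hck
    set w : Fin 3 → Kˣ := fun l =>
      if l = i then Units.mk0 (c j) hcj
      else if l = j then Units.mk0 (-(c i)) (neg_ne_zero.mpr hci) else 1 with hw
    set f := e.unitsSMul w with hf
    have hfi : f i = c j • e i := by
      rw [hf, Module.Basis.unitsSMul_apply]; simp [hw]
    have hfj : f j = (-(c i)) • e j := by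
      rw [hf, Module.Basis.unitsSMul_apply]; simp [hw, Ne.symm hij]
    have hfk : f k = e k := by
      rw [hf, Module.Basis.unitsSMul_apply]; simp [hw, Ne.symm hik, Ne.symm hjk]
    have hmk : f k ∈ I := (hker _).mpr (by rw [hfk]; exact hck)
    have hmij : f i + f j ∈ I := by
      refine (hker _).mpr ?_
      rw [hfi, hfj, map_add, map_smul, map_smul, smul_eq_mul, smul_eq_mul]
      show c j * c i + -(c i) * c j = 0
      ring
    exact ⟨f, nat_unitsSMul mul e hnat w, k, i, j, Ne.symm hik, hij, Ne.symm hjk,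
      span_eq_of hdim hmk hmij (liA f (Ne.symm hik) hij (Ne.symm hjk))⟩
  -- helper: no vanishing coefficient
  have case3 : c 0 ≠ 0 → c 1 ≠ 0 → c 2 ≠ 0 → SpannedTypeThree mul I := by
    intro h0 h1 h2
    set w : Fin 3 → Kˣ := ![Units.mk0 (c 0)⁻¹ (inv_ne_zero h0),
      Units.mk0 (-(c 1)⁻¹) (neg_ne_zero.mpr (inv_ne_zero h1)),
      Units.mk0 (c 2)⁻¹ (inv_ne_zero h2)] with hw
    set f := e.unitsSMul w with hf
    have hf0 : f 0 = (c 0)⁻¹ • e 0 := by rw [hf, Module.Basis.unitsSMul_apply]; simp [hw]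
    have hf1 : f 1 = (-(c 1)⁻¹) • e 1 := by rw [hf, Module.Basis.unitsSMul_apply]; simp [hw]
    have hf2 : f 2 = (c 2)⁻¹ • e 2 := by rw [hf, Module.Basis.unitsSMul_apply]; simp [hw]
    have hm01 : f 0 + f 1 ∈ I := by
      refine (hker _).mpr ?_
      rw [hf0, hf1, map_add, map_smul, map_smul, smul_eq_mul, smul_eq_mul]
      show (c 0)⁻¹ * c 0 + -(c 1)⁻¹ * c 1 = 0
      rw [neg_mul, inv_mul_cancel₀ h0, inv_mul_cancel₀ h1]
      ring
    have hm12 : f 1 + f 2 ∈ I := by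
      refine (hker _).mpr ?_
      rw [hf1, hf2, map_add, map_smul, map_smul, smul_eq_mul, smul_eq_mul]
      show -(c 1)⁻¹ * c 1 + (c 2)⁻¹ * c 2 = 0
      rw [neg_mul, inv_mul_cancel₀ h1, inv_mul_cancel₀ h2]
      ring
    exact ⟨f, nat_unitsSMul mul e hnat w, 0, 1, 2, by decide, by decide, by decide,
      span_eq_of hdim hm01 hm12 (liB f (by decide) (by decide) (by decide))⟩
  -- the main trichotomy
  have hmain : SpannedByTwoBasisVectors mul I ∨ SpannedTypeTwo mul I ∨
      SpannedTypeThree mul I := by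
    by_cases h0 : c 0 = 0 <;> by_cases h1 : c 1 = 0 <;> by_cases h2 : c 2 = 0
    · -- all zero: impossible
      exfalso
      have hle : (⊤ : Submodule K A) ≤ I := by
        rw [← e.span_eq, Submodule.span_le]
        rintro x ⟨l, rfl⟩
        refine (hker _).mpr ?_
        rcases fin3_cover (i := 0) (j := 1) (k := 2) (by decide) (by decide) (by decide) l
          with rfl | rfl | rfl <;> assumption
      have : I = ⊤ := top_le_iff.mp hle
      rw [this, finrank_top, hA3] at hdim
      omega
    · exact Or.inl (case1 (by decide) h0 h1)
    · exact Or.inl (case1 (by decide) h0 h2)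
    · exact Or.inr (Or.inl (case2 (i := 1) (j := 2) (k := 0) (by decide) (by decide)
        (by decide) h1 h2 h0))
    · exact Or.inl (case1 (by decide) h1 h2)
    · exact Or.inr (Or.inl (case2 (i := 0) (j := 2) (k := 1) (by decide) (by decide)
        (by decide) h0 h2 h1))
    · exact Or.inr (Or.inl (case2 (i := 0) (j := 1) (k := 2) (by decide) (by decide)
        (by decide) h0 h1 h2))
    · exact Or.inr (Or.inr (case3 h0 h1 h2))
  by_cases hc1 : SpannedByTwoBasisVectors mul I
  · exact Or.inl hc1
  by_cases hc2 : SpannedTypeTwo mul I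
  · exact Or.inr (Or.inl ⟨hc1, hc2, evo_of_type2 mul hcomm hc2⟩)
  have hc3 : SpannedTypeThree mul I := by tauto
  exact Or.inr (Or.inr ⟨hc1, hc2, hc3,
    fun hperf => (type3_perfect mul hc3 hI hdim hA3 hperf).elim⟩)

end EvolutionAlgebra
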